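/- Let ℓ, m ∈ ℤ≥1, a ∈ ℂ∖{0}, 0 ≤ ν ≤ min{ℓ,m}, and n = ℓ+m−2ν. In V(m) ⊗ V(ℓ,a), the vectors x̃'ₙ satisfy Δ(K₁)x̃'ₙ = q^{−n}x̃'ₙ, Δ(E₁⁻)x̃'ₙ = 0, and (E₁⁻ ⊗ 1)x̃'ₙ = x̃'_{n+2}, where E₁⁻ ⊗ 1 denotes the operator E₁⁻ of V(m) acting on the first tensor factor and x̃'_{ℓ+m+2} is interpreted as 0. -/

import Mathlib

open scoped TensorProduct

noncomputable section

/-- The `q`-integer `[t] = (q^t - q^(-t))/(q - q⁻¹)`. -/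
def qnum (q : ℂ) (t : ℤ) : ℂ := (q ^ t - q ^ (-t)) / (q - q⁻¹)

/-- The `q`-factorial `[t]! = [t][t-1]⋯[1]`. -/
def qfac (q : ℂ) (t : ℕ) : ℂ := ∏ k ∈ Finset.range t, qnum q ((k : ℤ) + 1)

/-- Commutator `[X,Y] = XY - YX`. -/
def brk {V : Type*} [AddCommGroup V] [Module ℂ V] (X Y : Module.End ℂ V) :
    Module.End ℂ V := X * Y - Y * X

/-- `q`-commutator `[X,Y]_t = t XY - t⁻¹ YX`. -/
def brkq {V : Type*} [AddCommGroup V] [Module ℂ V] (t : ℂ) (X Y : Module.End ℂ V) :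
    Module.End ℂ V := t • (X * Y) - t⁻¹ • (Y * X)

/-- A `U'_q(L(sl₂))`-module structure on a complex vector space `V`:
operators `(E₀⁺, E₁⁺, E₁⁻, K₀, K₁)` with `K₀, K₁` mutually inverse (hence invertible) and
the defining relations; `K₀ = K₁⁻¹` throughout. -/
structure IsUqpRep (q : ℂ) {V : Type*} [AddCommGroup V] [Module ℂ V]
    (E0 E1p E1m K0 K1 : Module.End ℂ V) : Prop where
  K0K1 : K0 * K1 = 1
  K1K0 : K1 * K0 = 1
  K0E0 : K0 * E0 = q ^ 2 • (E0 * K0)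
  K1E1p : K1 * E1p = q ^ 2 • (E1p * K1)
  K1E1m : K1 * E1m = (q ^ 2)⁻¹ • (E1m * K1)
  K1E0 : K1 * E0 = (q ^ 2)⁻¹ • (E0 * K1)
  K0E1p : K0 * E1p = (q ^ 2)⁻¹ • (E1p * K0)
  K0E1m : K0 * E1m = q ^ 2 • (E1m * K0)
  e1comm : E1p * E1m - E1m * E1p = (q - q⁻¹)⁻¹ • (K1 - K0)
  e0e1m : E0 * E1m = E1m * E0
  serre01 : brk E0 (brkq q⁻¹ E0 (brkq q E0 E1p)) = 0
  serre10 : brk E1p (brkq q⁻¹ E1p (brkq q E1p E0)) = 0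

/-- `K₀` of the evaluation module `V(ℓ,a)`: `K₀ vᵢ = q^(2i-ℓ) vᵢ`. -/
def evalK0 (q : ℂ) (ℓ : ℕ) : Module.End ℂ (Fin (ℓ + 1) → ℂ) :=
  (Matrix.diagonal fun i : Fin (ℓ + 1) => q ^ (2 * (i : ℤ) - ℓ)).mulVecLin

/-- `K₁` of the evaluation module `V(ℓ,a)`: `K₁ vᵢ = q^(ℓ-2i) vᵢ`. -/
def evalK1 (q : ℂ) (ℓ : ℕ) : Module.End ℂ (Fin (ℓ + 1) → ℂ) :=
  (Matrix.diagonal fun i : Fin (ℓ + 1) => q ^ ((ℓ : ℤ) - 2 * i)).mulVecLin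

/-- `E₀⁺` of the evaluation module `V(ℓ,a)`: `E₀⁺ vᵢ = a q [i+1] vᵢ₊₁`. -/
def evalE0 (q a : ℂ) (ℓ : ℕ) : Module.End ℂ (Fin (ℓ + 1) → ℂ) :=
  (Matrix.of fun j i : Fin (ℓ + 1) =>
    if (j : ℕ) = (i : ℕ) + 1 then a * q * qnum q ((i : ℤ) + 1) else 0).mulVecLin

/-- `E₁⁺` of the evaluation module `V(ℓ,a)`: `E₁⁺ vᵢ = [ℓ-i+1] vᵢ₋₁`. -/
def evalE1p (q : ℂ) (ℓ : ℕ) : Module.End ℂ (Fin (ℓ + 1) → ℂ) :=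
  (Matrix.of fun j i : Fin (ℓ + 1) =>
    if (i : ℕ) = (j : ℕ) + 1 then qnum q ((ℓ : ℤ) - (i : ℤ) + 1) else 0).mulVecLin

/-- `E₁⁻` of the evaluation module `V(ℓ,a)`: `E₁⁻ vᵢ = [i+1] vᵢ₊₁`. -/
def evalE1m (q : ℂ) (ℓ : ℕ) : Module.End ℂ (Fin (ℓ + 1) → ℂ) :=
  (Matrix.of fun j i : Fin (ℓ + 1) =>
    if (j : ℕ) = (i : ℕ) + 1 then qnum q ((i : ℤ) + 1) else 0).mulVecLin

/-- Irreducibility: the only subspaces invariant under all five operators are `⊥` and `⊤`. -/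
def IsIrred {V : Type*} [AddCommGroup V] [Module ℂ V]
    (E0 E1p E1m K0 K1 : Module.End ℂ V) : Prop :=
  ∀ W : Submodule ℂ V, (∀ v ∈ W, E0 v ∈ W) → (∀ v ∈ W, E1p v ∈ W) →
    (∀ v ∈ W, E1m v ∈ W) → (∀ v ∈ W, K0 v ∈ W) → (∀ v ∈ W, K1 v ∈ W) →
    W = ⊥ ∨ W = ⊤

/-- Type `(1,1)`: `K₀` is diagonalizable with all eigenvalues of the form `q^(2i-d)`,
`0 ≤ i ≤ d`, i.e. the corresponding eigenspaces span. -/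
def IsType11 (q : ℂ) {V : Type*} [AddCommGroup V] [Module ℂ V] (K0 : Module.End ℂ V) : Prop :=
  ∃ d : ℕ, ⨆ i : Fin (d + 1), Module.End.eigenspace K0 (q ^ (2 * (i : ℤ) - d)) = ⊤

/-- `Δ(K₀) = K₀ ⊗ K₀` on `V(ℓ,a) ⊗ V(m,b)`. -/
def dK0 (q : ℂ) (ℓ m : ℕ) :
    Module.End ℂ (TensorProduct ℂ (Fin (ℓ + 1) → ℂ) (Fin (m + 1) → ℂ)) :=
  TensorProduct.map (evalK0 q ℓ) (evalK0 q m)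

/-- `Δ(K₁) = K₁ ⊗ K₁` on `V(ℓ,a) ⊗ V(m,b)`. -/
def dK1 (q : ℂ) (ℓ m : ℕ) :
    Module.End ℂ (TensorProduct ℂ (Fin (ℓ + 1) → ℂ) (Fin (m + 1) → ℂ)) :=
  TensorProduct.map (evalK1 q ℓ) (evalK1 q m)

/-- `Δ(E₀⁺) = K₀ ⊗ E₀⁺ + E₀⁺ ⊗ 1` on `V(ℓ,a) ⊗ V(m,b)`. -/
def dE0 (q : ℂ) (ℓ m : ℕ) (a b : ℂ) :
    Module.End ℂ (TensorProduct ℂ (Fin (ℓ + 1) → ℂ) (Fin (m + 1) → ℂ)) :=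
  TensorProduct.map (evalK0 q ℓ) (evalE0 q b m) +
    TensorProduct.map (evalE0 q a ℓ) LinearMap.id

/-- `Δ(E₁⁺) = K₁ ⊗ E₁⁺ + E₁⁺ ⊗ 1` on `V(ℓ,a) ⊗ V(m,b)`. -/
def dE1p (q : ℂ) (ℓ m : ℕ) :
    Module.End ℂ (TensorProduct ℂ (Fin (ℓ + 1) → ℂ) (Fin (m + 1) → ℂ)) :=
  TensorProduct.map (evalK1 q ℓ) (evalE1p q m) +
    TensorProduct.map (evalE1p q ℓ) LinearMap.id

/-- `Δ(E₁⁻) = 1 ⊗ E₁⁻ + E₁⁻ ⊗ K₁⁻¹` on `V(ℓ,a) ⊗ V(m,b)` (note `K₁⁻¹ = K₀`). -/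
def dE1m (q : ℂ) (ℓ m : ℕ) :
    Module.End ℂ (TensorProduct ℂ (Fin (ℓ + 1) → ℂ) (Fin (m + 1) → ℂ)) :=
  TensorProduct.map LinearMap.id (evalE1m q m) +
    TensorProduct.map (evalE1m q ℓ) (evalK0 q m)

/-- A linear map intertwines the five structure operators of two
`U'_q(L(sl₂))`-module structures. -/
def IntertwinesAll {V W : Type*} [AddCommGroup V] [Module ℂ V] [AddCommGroup W] [Module ℂ W]
    (σ : V →ₗ[ℂ] W) (A0 A1p A1m AK0 AK1 : Module.End ℂ V)
    (B0 B1p B1m BK0 BK1 : Module.End ℂ W) : Prop :=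
  σ ∘ₗ A0 = B0 ∘ₗ σ ∧ σ ∘ₗ A1p = B1p ∘ₗ σ ∧ σ ∘ₗ A1m = B1m ∘ₗ σ ∧
    σ ∘ₗ AK0 = BK0 ∘ₗ σ ∧ σ ∘ₗ AK1 = BK1 ∘ₗ σ

/-- The lowest weight vector `x̃'ₙ`, `n = ℓ+m-2ν`, of the `ν`-th Clebsch-Gordan component
of `V(m) ⊗ V(ℓ,a)`; defined to be `0` for `ν` out of range. -/
def xt' (q : ℂ) (ℓ m : ℕ) (ν : ℤ) :
    TensorProduct ℂ (Fin (m + 1) → ℂ) (Fin (ℓ + 1) → ℂ) :=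
  if h : 0 ≤ ν ∧ ν ≤ ℓ ∧ ν ≤ m then
    ∑ j : Fin (ν.toNat + 1),
      ((-1) ^ (j : ℕ) * q ^ ((j : ℕ) * (ℓ - (j : ℕ) + 1)) *
          qfac q (m - ν.toNat + (j : ℕ)) * qfac q (ℓ - (j : ℕ))) •
        (Pi.single (⟨m - ν.toNat + (j : ℕ), by have := j.isLt; omega⟩ : Fin (m + 1)) (1 : ℂ)
          ⊗ₜ[ℂ] Pi.single (⟨ℓ - (j : ℕ), by have := j.isLt; omega⟩ : Fin (ℓ + 1)) (1 : ℂ))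
  else 0

def sgl (N k : ℕ) : Fin (N+1) → ℂ :=
  if h : k ≤ N then Pi.single ⟨k, Nat.lt_succ_of_le h⟩ (1:ℂ) else 0

lemma sgl_of_gt {N k : ℕ} (h : N < k) : sgl N k = 0 := dif_neg (by omega)

lemma evalK1_sgl (q : ℂ) (N k : ℕ) :
    evalK1 q N (sgl N k) = q ^ ((N:ℤ) - 2*k) • sgl N k := by
  unfold sgl
  split_ifs with h
  · ext i
    simp [evalK1, Matrix.mulVecLin_apply, Matrix.mulVec_single, Matrix.diagonal_apply,
      Pi.single_apply, Pi.smul_apply, smul_eq_mul]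
  · simp

lemma evalK0_sgl (q : ℂ) (N k : ℕ) :
    evalK0 q N (sgl N k) = q ^ (2*(k:ℤ) - N) • sgl N k := by
  unfold sgl
  split_ifs with h
  · ext i
    simp [evalK0, Matrix.mulVecLin_apply, Matrix.mulVec_single, Matrix.diagonal_apply,
      Pi.single_apply, Pi.smul_apply, smul_eq_mul]
  · simp

lemma evalE1m_sgl (q : ℂ) (N k : ℕ) :
    evalE1m q N (sgl N k) = qnum q ((k:ℤ) + 1) • sgl N (k+1) := by
  unfold sgl
  split_ifs with h h2 h2
  · ext i
    simp [evalE1m, Matrix.mulVecLin_apply, Matrix.mulVec_single, Matrix.of_apply,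
      Pi.single_apply, Pi.smul_apply, smul_eq_mul, Fin.ext_iff]
  · ext i
    have : (i:ℕ) ≠ k + 1 := by omega
    simp [evalE1m, Matrix.mulVecLin_apply, Matrix.mulVec_single, Matrix.of_apply,
      Pi.single_apply, this]
  · omega
  · simp

def cf (q : ℂ) (ℓ m ν j : ℕ) : ℂ :=
  (-1) ^ j * q ^ (j * (ℓ - j + 1)) * qfac q (m - ν + j) * qfac q (ℓ - j)

lemma qfac_succ (q : ℂ) (t : ℕ) : qfac q (t + 1) = qfac q t * qnum q ((t : ℤ) + 1) :=
  Finset.prod_range_succ _ t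

lemma xt'_eq (q : ℂ) (ℓ m ν : ℕ) (hνℓ : ν ≤ ℓ) (hνm : ν ≤ m) :
    xt' q ℓ m (ν : ℤ) = ∑ j ∈ Finset.range (ν + 1),
      cf q ℓ m ν j • (sgl m (m - ν + j) ⊗ₜ[ℂ] sgl ℓ (ℓ - j)) := by
  rw [xt', dif_pos ⟨Int.natCast_nonneg ν, by exact_mod_cast hνℓ, by exact_mod_cast hνm⟩]
  have h := Fin.sum_univ_eq_sum_range
    (fun j => cf q ℓ m ν j • (sgl m (m - ν + j) ⊗ₜ[ℂ] sgl ℓ (ℓ - j))) (ν + 1)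
  rw [← h]
  refine Finset.sum_congr rfl fun j _ => ?_
  simp only [cf, sgl]
  rw [dif_pos (show m - ν + (j : ℕ) ≤ m by omega),
    dif_pos (show ℓ - (j : ℕ) ≤ ℓ by omega)]
  rfl

lemma keylem (q : ℂ) (hq0 : q ≠ 0) (ℓ m ν j : ℕ) (hj : j < ν) (hνℓ : ν ≤ ℓ) (hνm : ν ≤ m) :
    cf q ℓ m ν (j + 1) * qnum q ((↑(ℓ - (j + 1)) : ℤ) + 1) +
      cf q ℓ m ν j * (qnum q ((↑(m - ν + j) : ℤ) + 1) *
        q ^ (2 * ((ℓ - j : ℕ) : ℤ) - (ℓ : ℤ))) = 0 := by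
  obtain ⟨B, hB⟩ : ∃ B, ℓ - j = B + 1 := ⟨ℓ - j - 1, by omega⟩
  have h1 : ℓ - (j + 1) = B := by omega
  have h2 : ℓ - j + 1 = B + 2 := by omega
  have h3 : (ℓ : ℤ) = j + B + 1 := by omega
  have h4 : m - ν + (j + 1) = (m - ν + j) + 1 := by omega
  have h5 : ℓ - (j + 1) + 1 = B + 1 := by omega
  set A := m - ν + j with hA
  simp only [cf, h1, h2, h4, h5, hB]
  rw [qfac_succ q A, qfac_succ q B]
  have hpow : q ^ ((j + 1) * (B + 1)) = q ^ (j * (B + 2)) * q ^ (2 * ((B : ℤ) + 1) - (ℓ : ℤ)) := by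
    rw [← zpow_natCast q ((j + 1) * (B + 1)), ← zpow_natCast q (j * (B + 2)), ← zpow_add₀ hq0]
    congr 1
    push_cast
    rw [h3]; ring
  have h6 : 2 * ((↑(B + 1) : ℤ)) - (ℓ : ℤ) = 2 * ((B : ℤ) + 1) - (ℓ : ℤ) := by push_cast; ring
  rw [h6, hpow]
  push_cast
  ring


/-- in `V(m) ⊗ V(ℓ,a)`, `Δ(K₁) x̃'ₙ = q^(-n) x̃'ₙ`, `Δ(E₁⁻) x̃'ₙ = 0`, and
`(E₁⁻ ⊗ 1) x̃'ₙ = x̃'ₙ₊₂` (with `x̃'_{ℓ+m+2} = 0`, i.e. `xt'` at `ν - 1`). -/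
theorem stmt16 (q : ℂ) (hq0 : q ≠ 0) (hq : ∀ n : ℕ, 0 < n → q ^ n ≠ 1)
    (ℓ m : ℕ) (hℓ : 1 ≤ ℓ) (hm : 1 ≤ m) (a : ℂ) (ha : a ≠ 0)
    (ν : ℕ) (hνℓ : ν ≤ ℓ) (hνm : ν ≤ m) :
    dK1 q m ℓ (xt' q ℓ m ν) = (q ^ (ℓ + m - 2 * ν))⁻¹ • xt' q ℓ m ν ∧
    dE1m q m ℓ (xt' q ℓ m ν) = 0 ∧
    TensorProduct.map (evalE1m q m)
        (LinearMap.id : (Fin (ℓ + 1) → ℂ) →ₗ[ℂ] (Fin (ℓ + 1) → ℂ)) (xt' q ℓ m ν) =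
      xt' q ℓ m ((ν : ℤ) - 1) := by
  refine ⟨?_, ?_, ?_⟩
  · rw [xt'_eq q ℓ m ν hνℓ hνm, Finset.smul_sum]
    simp only [dK1]
    rw [map_sum]
    refine Finset.sum_congr rfl fun j hj => ?_
    rw [Finset.mem_range] at hj
    rw [LinearMap.map_smul, TensorProduct.map_tmul, evalK1_sgl, evalK1_sgl,
      TensorProduct.smul_tmul_smul, smul_smul, smul_smul]
    congr 1
    have key : q ^ ((m : ℤ) - 2 * ↑(m - ν + j)) * q ^ ((ℓ : ℤ) - 2 * ↑(ℓ - j)) =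
        (q ^ (ℓ + m - 2 * ν))⁻¹ := by
      rw [← zpow_add₀ hq0, ← zpow_natCast q (ℓ + m - 2 * ν), ← zpow_neg]
      congr 1
      omega
    rw [key]; ring
  · rw [xt'_eq q ℓ m ν hνℓ hνm]
    simp only [dE1m, LinearMap.add_apply, map_sum]
    set F := TensorProduct.map (LinearMap.id : Module.End ℂ (Fin (m+1) → ℂ)) (evalE1m q ℓ)
      with hF
    set G := TensorProduct.map (evalE1m q m) (evalK0 q ℓ) with hG
    rw [Finset.sum_add_distrib]
    rw [Finset.sum_range_succ'
      (fun j => F (cf q ℓ m ν j • (sgl m (m - ν + j) ⊗ₜ[ℂ] sgl ℓ (ℓ - j)))) ν,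
      Finset.sum_range_succ
      (fun j => G (cf q ℓ m ν j • (sgl m (m - ν + j) ⊗ₜ[ℂ] sgl ℓ (ℓ - j)))) ν]
    have hF0 : F (cf q ℓ m ν 0 • (sgl m (m - ν + 0) ⊗ₜ[ℂ] sgl ℓ (ℓ - 0))) = 0 := by
      rw [map_smul, hF, TensorProduct.map_tmul, evalE1m_sgl,
        sgl_of_gt (show ℓ < ℓ - 0 + 1 by omega)]
      simp
    have hGν : G (cf q ℓ m ν ν • (sgl m (m - ν + ν) ⊗ₜ[ℂ] sgl ℓ (ℓ - ν))) = 0 := by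
      rw [map_smul, hG, TensorProduct.map_tmul, evalE1m_sgl,
        sgl_of_gt (show m < m - ν + ν + 1 by omega)]
      simp
    rw [hF0, hGν, add_zero, add_zero, ← Finset.sum_add_distrib]
    refine Finset.sum_eq_zero fun j hj => ?_
    rw [Finset.mem_range] at hj
    rw [map_smul, map_smul, hF, hG, TensorProduct.map_tmul, TensorProduct.map_tmul,
      LinearMap.id_apply, evalE1m_sgl, evalE1m_sgl, evalK0_sgl]
    have e1 : ℓ - (j + 1) + 1 = ℓ - j := by omega
    have e2 : m - ν + (j + 1) = m - ν + j + 1 := by omega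
    rw [e1, e2]
    rw [TensorProduct.tmul_smul, TensorProduct.smul_tmul_smul, smul_smul, smul_smul,
      ← add_smul]
    rw [keylem q hq0 ℓ m ν j hj hνℓ hνm, zero_smul]
  · rw [xt'_eq q ℓ m ν hνℓ hνm, map_sum, Finset.sum_range_succ]
    have hlast : TensorProduct.map (evalE1m q m)
        (LinearMap.id : (Fin (ℓ + 1) → ℂ) →ₗ[ℂ] (Fin (ℓ + 1) → ℂ))
        (cf q ℓ m ν ν • (sgl m (m - ν + ν) ⊗ₜ[ℂ] sgl ℓ (ℓ - ν))) = 0 := by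
      rw [map_smul, TensorProduct.map_tmul, evalE1m_sgl,
        sgl_of_gt (show m < m - ν + ν + 1 by omega)]
      simp
    rw [hlast, add_zero]
    rcases Nat.eq_zero_or_pos ν with h0 | hpos
    · subst h0
      rw [xt', dif_neg (by omega)]
      simp
    · have hcast : (ν : ℤ) - 1 = ((ν - 1 : ℕ) : ℤ) := by omega
      rw [hcast, xt'_eq q ℓ m (ν - 1) (by omega) (by omega)]
      have hr : ν - 1 + 1 = ν := by omega
      rw [hr]
      refine Finset.sum_congr rfl fun j hj => ?_
      rw [Finset.mem_range] at hj
      rw [map_smul, TensorProduct.map_tmul, LinearMap.id_apply, evalE1m_sgl]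
      have e1 : m - (ν - 1) + j = m - ν + j + 1 := by omega
      rw [e1, TensorProduct.smul_tmul', smul_smul]
      congr 1
      simp only [cf, e1]
      rw [show (m - ν + j + 1) = (m - ν + j) + 1 from rfl, qfac_succ]
      ring

end
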